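/- For n×n complex matrices A and B, the largest singular value of the Fan product satisfies σ_1(A ⋆ B) ≤ σ_1(A)·σ_1(B), where (A ⋆ B)_ij = −a_ii b_ii if i = j and a_ij b_ij otherwise. -/

import Mathlib

open Matrix Finset
open scoped ComplexOrder

/-- The `i`-th largest singular value of an `n × n` complex matrix
(indexed by `i : Fin n`, with `i = 0` the largest). -/
noncomputable def singularValue {n : ℕ} (A : Matrix (Fin n) (Fin n) ℂ) (i : Fin n) : ℝ :=
  Real.sqrt ((((Matrix.isHermitian_conjTranspose_mul_self A)).eigenvalues ∘
    Tuple.sort ((Matrix.isHermitian_conjTranspose_mul_self A)).eigenvalues) i.rev)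

/-- Euclidean norm of the `j`-th column of `Z`. -/
noncomputable def colNorm {n : ℕ} (Z : Matrix (Fin n) (Fin n) ℂ) (j : Fin n) : ℝ :=
  Real.sqrt (∑ k, ‖Z k j‖ ^ 2)

/-- The `i`-th largest column norm of `Z` (decreasingly ordered `c_i(Z)`). -/
noncomputable def colNormSorted {n : ℕ} (Z : Matrix (Fin n) (Fin n) ℂ) (i : Fin n) : ℝ :=
  (colNorm Z ∘ Tuple.sort (colNorm Z)) i.rev

/-- The Fan product. -/
def fanProduct {n : ℕ} (A B : Matrix (Fin n) (Fin n) ℂ) : Matrix (Fin n) (Fin n) ℂ :=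
  Matrix.of fun i j => if i = j then -(A i i * B i i) else A i j * B i j

lemma sort_last {n : ℕ} (hn : 0 < n) (f : Fin n → ℝ) :
    (f ∘ Tuple.sort f) (Fin.rev ⟨0, hn⟩) =
      univ.sup' ⟨⟨0, hn⟩, mem_univ _⟩ f := by
  have hlast : ∀ j : Fin n, j ≤ Fin.rev ⟨0, hn⟩ := by
    intro j
    simp [Fin.le_def, Fin.rev]
    omega
  apply le_antisymm
  · exact Finset.le_sup' f (mem_univ _)
  · apply Finset.sup'_le
    intro i _
    have : f i = (f ∘ Tuple.sort f) ((Tuple.sort f)⁻¹ i) := by simp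
    rw [this]
    exact Tuple.monotone_sort f (hlast _)

noncomputable def maxEig {n : ℕ} (hn : 0 < n) {H : Matrix (Fin n) (Fin n) ℂ}
    (hH : H.IsHermitian) : ℝ :=
  univ.sup' ⟨⟨0, hn⟩, mem_univ _⟩ hH.eigenvalues

lemma quad_form {n : ℕ} {H : Matrix (Fin n) (Fin n) ℂ} (hH : H.IsHermitian)
    (v : Fin n → ℂ) :
    ∃ w : Fin n → ℂ, (∑ i, Complex.normSq (w i)) = (∑ i, Complex.normSq (v i)) ∧
      star v ⬝ᵥ (H *ᵥ v) = ∑ i, (hH.eigenvalues i : ℂ) * Complex.normSq (w i) := by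
  set U : Matrix (Fin n) (Fin n) ℂ := (hH.eigenvectorUnitary : Matrix (Fin n) (Fin n) ℂ)
  have hU : U * star U = 1 := (Matrix.mem_unitaryGroup_iff).mp hH.eigenvectorUnitary.2
  set w : Fin n → ℂ := star U *ᵥ v with hw
  refine ⟨w, ?_, ?_⟩
  · have h1 : star w ⬝ᵥ w = star v ⬝ᵥ v := by
      rw [hw, star_mulVec, ← star_eq_conjTranspose, star_star, dotProduct_mulVec,
        vecMul_vecMul, hU, vecMul_one]
    have h2 : ∀ u : Fin n → ℂ, star u ⬝ᵥ u = ∑ i, (Complex.normSq (u i) : ℂ) := by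
      intro u
      simp [dotProduct, Complex.normSq_eq_conj_mul_self]
    rw [h2, h2] at h1
    exact_mod_cast h1
  · conv_lhs => rw [hH.spectral_theorem, Unitary.conjStarAlgAut_apply]
    rw [← mulVec_mulVec, ← mulVec_mulVec, dotProduct_mulVec]
    have : star v ᵥ* U = star w := by
      rw [hw, star_mulVec, ← star_eq_conjTranspose, star_star]
    rw [this, ← hw]
    simp only [dotProduct, mulVec_diagonal, Function.comp_apply]
    congr 1
    ext i
    simp only [Pi.star_apply, RCLike.star_def, Complex.normSq_eq_conj_mul_self,
      RCLike.ofReal_mul]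
    rw [← Complex.coe_algebraMap]
    ring

lemma le_maxEig {n : ℕ} (hn : 0 < n) {H : Matrix (Fin n) (Fin n) ℂ}
    (hH : H.IsHermitian) (i : Fin n) : hH.eigenvalues i ≤ maxEig hn hH :=
  Finset.le_sup' _ (mem_univ i)

lemma quad_le {n : ℕ} (hn : 0 < n) {H : Matrix (Fin n) (Fin n) ℂ}
    (hH : H.IsHermitian) (v : Fin n → ℂ) :
    (star v ⬝ᵥ (H *ᵥ v)).re ≤ maxEig hn hH * ∑ i, Complex.normSq (v i) := by
  obtain ⟨w, hw1, hw2⟩ := quad_form hH v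
  rw [hw2, ← hw1]
  have : (∑ i, ((hH.eigenvalues i : ℂ) * (Complex.normSq (w i) : ℂ))).re
      = ∑ i, hH.eigenvalues i * Complex.normSq (w i) := by
    rw [Complex.re_sum]
    congr 1; ext i
    norm_cast
  rw [this, Finset.mul_sum]
  apply Finset.sum_le_sum
  intro i _
  exact mul_le_mul_of_nonneg_right (le_maxEig hn hH i) (Complex.normSq_nonneg _)

lemma mulVec_quad {n : ℕ} (M : Matrix (Fin n) (Fin n) ℂ) (v : Fin n → ℂ) :
    star v ⬝ᵥ ((Mᴴ * M) *ᵥ v) = ∑ i, (Complex.normSq ((M *ᵥ v) i) : ℂ) := by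
  rw [← mulVec_mulVec, dotProduct_mulVec, ← star_mulVec]
  simp [dotProduct, Complex.normSq_eq_conj_mul_self]

lemma singularValue_eq {n : ℕ} (hn : 0 < n) (M : Matrix (Fin n) (Fin n) ℂ) :
    singularValue M ⟨0, hn⟩ =
      Real.sqrt (maxEig hn (Matrix.isHermitian_conjTranspose_mul_self M)) := by
  rw [singularValue, sort_last hn]
  rfl

lemma maxEig_nonneg {n : ℕ} (hn : 0 < n) (M : Matrix (Fin n) (Fin n) ℂ) :
    0 ≤ maxEig hn (Matrix.isHermitian_conjTranspose_mul_self M) := by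
  have h := (Matrix.posSemidef_conjTranspose_mul_self (R := ℂ) M).eigenvalues_nonneg ⟨0, hn⟩
  exact le_trans h (le_maxEig hn _ _)

lemma sq_singularValue {n : ℕ} (hn : 0 < n) (M : Matrix (Fin n) (Fin n) ℂ) :
    (singularValue M ⟨0, hn⟩) ^ 2 = maxEig hn (Matrix.isHermitian_conjTranspose_mul_self M) := by
  rw [singularValue_eq hn, Real.sq_sqrt (maxEig_nonneg hn M)]

lemma singularValue_nonneg {n : ℕ} (hn : 0 < n) (M : Matrix (Fin n) (Fin n) ℂ) :
    0 ≤ singularValue M ⟨0, hn⟩ := by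
  rw [singularValue_eq hn]; exact Real.sqrt_nonneg _

lemma mulVec_norm_le {n : ℕ} (hn : 0 < n) (M : Matrix (Fin n) (Fin n) ℂ) (v : Fin n → ℂ) :
    ∑ i, Complex.normSq ((M *ᵥ v) i) ≤
      (singularValue M ⟨0, hn⟩) ^ 2 * ∑ i, Complex.normSq (v i) := by
  rw [sq_singularValue hn]
  have h := quad_le hn (Matrix.isHermitian_conjTranspose_mul_self M) v
  rw [mulVec_quad, Complex.re_sum] at h
  simpa using h

lemma exists_eigvec {n : ℕ} (hn : 0 < n) (M : Matrix (Fin n) (Fin n) ℂ) :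
    ∃ v : Fin n → ℂ, (∑ i, Complex.normSq (v i)) = 1 ∧
      (Mᴴ * M) *ᵥ v = ((singularValue M ⟨0, hn⟩) ^ 2 : ℝ) • v := by
  obtain ⟨i₀, _, hi₀⟩ := Finset.exists_mem_eq_sup' (⟨⟨0, hn⟩, mem_univ _⟩ :
    (univ : Finset (Fin n)).Nonempty) (Matrix.isHermitian_conjTranspose_mul_self M).eigenvalues
  set hH := Matrix.isHermitian_conjTranspose_mul_self M
  refine ⟨⇑(hH.eigenvectorBasis i₀), ?_, ?_⟩
  · have h1 : ‖hH.eigenvectorBasis i₀‖ = 1 := hH.eigenvectorBasis.orthonormal.1 i₀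
    have h2 : (inner ℂ (hH.eigenvectorBasis i₀) (hH.eigenvectorBasis i₀) : ℂ) = 1 := by
      rw [inner_self_eq_norm_sq_to_K, h1]
      norm_num
    rw [EuclideanSpace.inner_eq_star_dotProduct] at h2
    have h3 : star (⇑(hH.eigenvectorBasis i₀) : Fin n → ℂ) ⬝ᵥ ⇑(hH.eigenvectorBasis i₀)
        = ∑ i, (Complex.normSq ((hH.eigenvectorBasis i₀) i) : ℂ) := by
      simp [dotProduct, Complex.normSq_eq_conj_mul_self]
    have h4 : (∑ i, (Complex.normSq ((hH.eigenvectorBasis i₀) i) : ℂ)) = 1 := by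
      rw [← h3, dotProduct_comm]; exact h2
    exact_mod_cast h4
  · rw [hH.mulVec_eigenvectorBasis i₀, sq_singularValue hn]
    rw [maxEig, hi₀]

lemma maxEig_mono {n : ℕ} (hn : 0 < n) (M : Matrix (Fin n) (Fin n) ℂ) :
    maxEig hn (Matrix.isHermitian_conjTranspose_mul_self M) ≤
      maxEig hn (Matrix.isHermitian_conjTranspose_mul_self Mᴴ) := by
  set lam := maxEig hn (Matrix.isHermitian_conjTranspose_mul_self M) with hlam
  obtain ⟨v, hv1, hv2⟩ := exists_eigvec hn M
  rw [sq_singularValue hn, ← hlam] at hv2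
  rcases le_or_gt lam 0 with h | h
  · calc lam ≤ 0 := h
      _ ≤ _ := maxEig_nonneg hn Mᴴ
  · set w : Fin n → ℂ := M *ᵥ v with hwdef
    have hw : ∑ i, Complex.normSq (w i) = lam := by
      have := mulVec_quad M v
      rw [hv2] at this
      have h2 : star v ⬝ᵥ (lam : ℝ) • v = ((lam * ∑ i, Complex.normSq (v i) : ℝ) : ℂ) := by
        simp [dotProduct, Complex.normSq_eq_conj_mul_self, Finset.mul_sum,
          Complex.real_smul]
        apply Finset.sum_congr rfl
        intro i _
        ring
      rw [h2, hv1, mul_one] at this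
      exact_mod_cast this.symm
    have hq : star w ⬝ᵥ ((Mᴴᴴ * Mᴴ) *ᵥ w) = ((lam ^ 2 : ℝ) : ℂ) := by
      rw [mulVec_quad Mᴴ w]
      have hMw : Mᴴ *ᵥ w = (lam : ℝ) • v := by
        rw [hwdef, mulVec_mulVec, hv2]
      rw [hMw]
      have e : ∑ i, Complex.normSq (((lam : ℝ) • v) i) = lam ^ 2 := by
        have e1 : ∀ i, Complex.normSq (((lam : ℝ) • v) i) = lam ^ 2 * Complex.normSq (v i) := by
          intro i
          simp [Complex.real_smul, Complex.normSq_mul, sq]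
        rw [Finset.sum_congr rfl fun i _ => e1 i, ← Finset.mul_sum, hv1, mul_one]
      rw [← e]
      norm_cast
    have hb := quad_le hn (Matrix.isHermitian_conjTranspose_mul_self Mᴴ) w
    rw [hq, hw] at hb
    simp only [Complex.ofReal_re] at hb
    nlinarith [hb]

lemma singularValue_conjTranspose {n : ℕ} (hn : 0 < n) (M : Matrix (Fin n) (Fin n) ℂ) :
    singularValue Mᴴ ⟨0, hn⟩ = singularValue M ⟨0, hn⟩ := by
  rw [singularValue_eq hn, singularValue_eq hn]
  congr 1
  apply le_antisymm
  · have := maxEig_mono hn Mᴴ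
    simpa using this
  · exact maxEig_mono hn M

lemma col_bound {n : ℕ} (hn : 0 < n) (A : Matrix (Fin n) (Fin n) ℂ) (j : Fin n) :
    ∑ k, Complex.normSq (A k j) ≤ (singularValue A ⟨0, hn⟩) ^ 2 := by
  have h := mulVec_norm_le hn A (Pi.single j 1)
  rw [Matrix.mulVec_single] at h
  have h1 : ∑ i, Complex.normSq (Pi.single (M := fun _ => ℂ) j 1 i) = 1 := by
    simp [Pi.single_apply, apply_ite Complex.normSq]
  rw [h1, mul_one] at h
  simpa using h

lemma row_bound {n : ℕ} (hn : 0 < n) (B : Matrix (Fin n) (Fin n) ℂ) (i : Fin n) :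
    ∑ j, Complex.normSq (B i j) ≤ (singularValue B ⟨0, hn⟩) ^ 2 := by
  have h := col_bound hn Bᴴ i
  rw [singularValue_conjTranspose hn] at h
  simpa [Matrix.conjTranspose_apply] using h

lemma star_dot_self {n : ℕ} (u : Fin n → ℂ) :
    star u ⬝ᵥ u = ∑ i, (Complex.normSq (u i) : ℂ) := by
  simp [dotProduct, Complex.normSq_eq_conj_mul_self]

lemma quad_eigvec {n : ℕ} (M : Matrix (Fin n) (Fin n) ℂ) (v : Fin n → ℂ) (r : ℝ)
    (h : (Mᴴ * M) *ᵥ v = (r : ℝ) • v) (hv1 : ∑ i, Complex.normSq (v i) = 1) :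
    ∑ i, Complex.normSq ((M *ᵥ v) i) = r := by
  have hq := mulVec_quad M v
  rw [h] at hq
  have h2 : star v ⬝ᵥ (r : ℝ) • v = ((r * ∑ i, Complex.normSq (v i) : ℝ) : ℂ) := by
    simp [dotProduct, Complex.normSq_eq_conj_mul_self, Finset.mul_sum,
      Complex.real_smul]
    apply Finset.sum_congr rfl
    intro i _
    ring
  rw [h2, hv1, mul_one] at hq
  exact_mod_cast hq.symm

theorem fanProduct_opNorm_le {n : ℕ} (hn : 0 < n) (A B : Matrix (Fin n) (Fin n) ℂ) :
    singularValue (fanProduct A B) ⟨0, hn⟩ ≤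
      singularValue A ⟨0, hn⟩ * singularValue B ⟨0, hn⟩ := by
  set C := fanProduct A B with hC
  set sA := singularValue A ⟨0, hn⟩ with hsA
  set sB := singularValue B ⟨0, hn⟩ with hsB
  set sC := singularValue C ⟨0, hn⟩ with hsC
  have hA0 : 0 ≤ sA := singularValue_nonneg hn A
  have hB0 : 0 ≤ sB := singularValue_nonneg hn B
  have hC0 : 0 ≤ sC := singularValue_nonneg hn C
  obtain ⟨v, hv1, hv2⟩ := exists_eigvec hn C
  set x : Fin n → ℂ := C *ᵥ v with hxdef
  have hx : ∑ i, Complex.normSq (x i) = sC ^ 2 := quad_eigvec C v _ hv2 hv1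
  clear_value sA sB sC
  clear hv2
  -- |C i j| = |A i j| * |B i j|
  have hCabs : ∀ i j, ‖C i j‖ = ‖A i j‖ * ‖B i j‖ := by
    intro i j
    by_cases h : i = j
    · subst h; simp [hC, fanProduct, _root_.map_mul]
    · simp [hC, fanProduct, h, _root_.map_mul]
  -- expansion of sC^2 as a double sum
  have hexp : ((sC ^ 2 : ℝ) : ℂ) = ∑ p : Fin n × Fin n,
      star (x p.1) * (C p.1 p.2 * v p.2) := by
    have hS : star x ⬝ᵥ x = ((sC ^ 2 : ℝ) : ℂ) := by
      rw [star_dot_self, ← hx]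
      norm_cast
    rw [← hS]
    conv_lhs => rw [show star x ⬝ᵥ x = star x ⬝ᵥ (C *ᵥ v) from rfl]
    rw [Fintype.sum_prod_type]
    simp [dotProduct, Matrix.mulVec, Finset.mul_sum]
  -- triangle inequality
  set f : Fin n × Fin n → ℝ := fun p => ‖x p.1‖ * ‖B p.1 p.2‖ with hf
  set g : Fin n × Fin n → ℝ := fun p => ‖A p.1 p.2‖ * ‖v p.2‖ with hg
  have htri : sC ^ 2 ≤ ∑ p : Fin n × Fin n, f p * g p := by
    have h1 : sC ^ 2 = ‖((sC ^ 2 : ℝ) : ℂ)‖ := by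
      rw [Complex.norm_real, Real.norm_eq_abs, abs_of_nonneg (by positivity)]
    rw [h1, hexp]
    refine le_trans (norm_sum_le _ _) ?_
    apply le_of_eq
    apply Finset.sum_congr rfl
    intro p _
    simp only [hf, hg]
    rw [norm_mul, norm_mul, hCabs p.1 p.2,
      show star (x p.1) = (starRingEnd ℂ) (x p.1) from rfl, Complex.norm_conj]
    ring
  have hfg0 : 0 ≤ ∑ p : Fin n × Fin n, f p * g p := by
    apply Finset.sum_nonneg
    intro p _
    positivity
  -- Cauchy–Schwarz
  have hcs := Finset.sum_mul_sq_le_sq_mul_sq univ f g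
  have hfsum : ∑ p : Fin n × Fin n, f p ^ 2 ≤ sC ^ 2 * sB ^ 2 := by
    rw [Fintype.sum_prod_type]
    have : ∀ i : Fin n, ∑ j, f (i, j) ^ 2 ≤ Complex.normSq (x i) * sB ^ 2 := by
      intro i
      have e : ∀ j, f (i, j) ^ 2 = Complex.normSq (x i) * Complex.normSq (B i j) := by
        intro j
        simp only [hf, mul_pow, Complex.sq_norm]
      rw [Finset.sum_congr rfl fun j _ => e j, ← Finset.mul_sum]
      exact mul_le_mul_of_nonneg_left (by rw [hsB]; exact row_bound hn B i) (Complex.normSq_nonneg _)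
    refine le_trans (Finset.sum_le_sum fun i _ => this i) ?_
    rw [← Finset.sum_mul, hx]
  have hgsum : ∑ p : Fin n × Fin n, g p ^ 2 ≤ sA ^ 2 := by
    rw [Fintype.sum_prod_type_right]
    have : ∀ j : Fin n, ∑ i, g (i, j) ^ 2 ≤ sA ^ 2 * Complex.normSq (v j) := by
      intro j
      have e : ∀ i, g (i, j) ^ 2 = Complex.normSq (A i j) * Complex.normSq (v j) := by
        intro i
        simp only [hg, mul_pow, Complex.sq_norm]
      rw [Finset.sum_congr rfl fun i _ => e i, ← Finset.sum_mul]
      exact mul_le_mul_of_nonneg_right (by rw [hsA]; exact col_bound hn A j) (Complex.normSq_nonneg _)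
    refine le_trans (Finset.sum_le_sum fun j _ => this j) ?_
    rw [← Finset.mul_sum, hv1, mul_one]
  -- combine
  have hkey : (sC ^ 2) ^ 2 ≤ (sC ^ 2 * sB ^ 2) * sA ^ 2 := by
    calc (sC ^ 2) ^ 2 ≤ (∑ p : Fin n × Fin n, f p * g p) ^ 2 := by
          apply pow_le_pow_left₀ (by positivity) htri
      _ ≤ (∑ p : Fin n × Fin n, f p ^ 2) * (∑ p : Fin n × Fin n, g p ^ 2) := hcs
      _ ≤ (sC ^ 2 * sB ^ 2) * sA ^ 2 := by
          apply mul_le_mul hfsum hgsum (Finset.sum_nonneg fun p _ => by positivity)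
            (by positivity)
  rcases eq_or_lt_of_le hC0 with h0 | h0
  · rw [← h0]; positivity
  · have hsq : sC ^ 2 ≤ (sA * sB) ^ 2 := by nlinarith [mul_pos h0 h0]
    calc sC = Real.sqrt (sC ^ 2) := (Real.sqrt_sq hC0).symm
      _ ≤ Real.sqrt ((sA * sB) ^ 2) := Real.sqrt_le_sqrt hsq
      _ = sA * sB := Real.sqrt_sq (by positivity)
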